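/- Let X ∈ ℝ^{p²} be a zero-mean Gaussian vector with covariance Σ = σ²(I − C(θ))⁻¹, where I − C(θ) is symmetric positive definite and θ has zero entry at (0,0). For any matrix θ̂ with θ̂[0,0]=0 and θ̂[i,j]=θ̂[-i,-j], the predictor Ŷ := Σ_{(k,l)≠(0,0)} θ̂[k,l] X[k,l] of X[0,0] satisfies E[(X[0,0] − Ŷ)²] = σ² + l(θ̂, θ), where l(θ̂,θ) := (1/p²) tr[(C(θ̂)−C(θ))Σ(C(θ̂)−C(θ))]. -/

import Mathlib

open Matrix MeasureTheory ProbabilityTheory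
open scoped NNReal ENNReal

def Cmat (p : ℕ) (θ : Matrix (ZMod p) (ZMod p) ℝ) :
    Matrix (ZMod p × ZMod p) (ZMod p × ZMod p) ℝ :=
  Matrix.of fun a b => θ (b.1 - a.1) (b.2 - a.2)

section Circ
set_option linter.unusedSectionVars false
variable {n : Type*} [AddCommGroup n] [Fintype n] [DecidableEq n]

def IsCirc (M : Matrix n n ℝ) : Prop := ∀ t a b : n, M (a + t) (b + t) = M a b

namespace IsCirc

lemma submatrix_eq {M : Matrix n n ℝ} (h : IsCirc M) (t : n) :
    M.submatrix (Equiv.addRight t) (Equiv.addRight t) = M := by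
  ext a b; exact h t a b

lemma one : IsCirc (1 : Matrix n n ℝ) := by
  intro t a b; simp [Matrix.one_apply]

lemma sub {M N : Matrix n n ℝ} (hM : IsCirc M) (hN : IsCirc N) : IsCirc (M - N) := by
  intro t a b; simp [Matrix.sub_apply, hM t a b, hN t a b]

lemma smul {M : Matrix n n ℝ} (hM : IsCirc M) (s : ℝ) : IsCirc (s • M) := by
  intro t a b; simp [Matrix.smul_apply, hM t a b]

lemma mul {M N : Matrix n n ℝ} (hM : IsCirc M) (hN : IsCirc N) : IsCirc (M * N) := by
  intro t a b
  simp only [Matrix.mul_apply]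
  refine Fintype.sum_equiv (Equiv.subRight t) _ _ fun k => ?_
  simp only [Equiv.subRight_apply]
  rw [← hM t a (k - t), ← hN t (k - t) b, sub_add_cancel]

lemma inv {M : Matrix n n ℝ} (h : IsCirc M) : IsCirc M⁻¹ := by
  intro t a b
  have h2 := congrArg Inv.inv (h.submatrix_eq t)
  rw [Matrix.inv_submatrix_equiv] at h2
  have h3 := congrFun (congrFun h2 a) b
  simpa [Matrix.submatrix_apply] using h3

lemma trace_eq {M : Matrix n n ℝ} (h : IsCirc M) :
    Matrix.trace M = (Fintype.card n : ℝ) * M 0 0 := by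
  have hd : ∀ a : n, M a a = M 0 0 := fun a => by simpa using h a 0 0
  rw [Matrix.trace]
  simp only [Matrix.diag]
  rw [Finset.sum_congr rfl fun a _ => hd a, Finset.sum_const, Finset.card_univ,
    nsmul_eq_mul]

end IsCirc

lemma isCirc_Cmat (p : ℕ) (θ : Matrix (ZMod p) (ZMod p) ℝ) : IsCirc (Cmat p θ) := by
  intro t a b
  show θ ((b + t).1 - (a + t).1) ((b + t).2 - (a + t).2) = θ (b.1 - a.1) (b.2 - a.2)
  simp [Prod.fst_add, Prod.snd_add, add_sub_add_right_eq_sub]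

end Circ

section Gauss
open Real Set
open scoped ENNReal

lemma integral_sq_mul_exp {b : ℝ} (hb : 0 < b) :
    ∫ x : ℝ, x ^ 2 * Real.exp (-b * x ^ 2) = (1 / b) ^ (3/2 : ℝ) * Real.sqrt π / 2 := by
  have habs := integral_comp_abs (f := fun t => t ^ 2 * Real.exp (-b * t ^ 2))
  simp only [sq_abs] at habs
  have hsub : ∫ x in Ioi (0:ℝ), x ^ 2 * Real.exp (-b * x ^ 2)
      = ∫ t in Ioi (0:ℝ), Real.sqrt t * Real.exp (-(b * t)) / 2 := by
    rw [← integral_comp_rpow_Ioi_of_pos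
      (g := fun t => Real.sqrt t * Real.exp (-(b * t)) / 2) two_pos]
    refine setIntegral_congr_fun measurableSet_Ioi fun x hx => ?_
    have hx0 : (0:ℝ) < x := hx
    have hx2 : x ^ (2:ℝ) = x ^ 2 := by
      rw [show (2:ℝ) = ((2:ℕ):ℝ) by norm_num, Real.rpow_natCast]
    rw [smul_eq_mul, hx2, show (2:ℝ) - 1 = 1 by norm_num, Real.rpow_one,
      Real.sqrt_sq hx0.le]
    ring_nf
  have hgam : ∫ t in Ioi (0:ℝ), Real.sqrt t * Real.exp (-(b * t)) / 2
      = (1 / b) ^ (3/2 : ℝ) * Real.Gamma (3/2) / 2 := by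
    rw [integral_div, ← Real.integral_rpow_mul_exp_neg_mul_Ioi (by norm_num : (0:ℝ) < 3/2) hb]
    congr 1
    refine setIntegral_congr_fun measurableSet_Ioi fun t ht => ?_
    rw [show (3/2 : ℝ) - 1 = 1/2 by norm_num, ← Real.sqrt_eq_rpow]
  have hgamval : Real.Gamma (3/2 : ℝ) = Real.sqrt π / 2 := by
    rw [show (3/2 : ℝ) = 1/2 + 1 by norm_num, Real.Gamma_add_one (by norm_num),
      Real.Gamma_one_half_eq]
    ring
  rw [habs, hsub, hgam, hgamval]
  ring

lemma sq_integral_gaussianReal (v : ℝ≥0) :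
    ∫ x : ℝ, x ^ 2 ∂(gaussianReal 0 v) = v := by
  by_cases hv : v = 0
  · simp [hv, gaussianReal_zero_var]
  · have hv0 : (0:ℝ) < v := by positivity
    rw [gaussianReal_of_var_ne_zero 0 hv]
    have hpdf : gaussianPDF 0 v = fun x =>
        ((Real.toNNReal (gaussianPDFReal 0 v x) : ℝ≥0) : ℝ≥0∞) := rfl
    rw [hpdf, integral_withDensity_eq_integral_smul
      ((measurable_gaussianPDFReal 0 v).real_toNNReal) (fun x : ℝ => x ^ 2)]
    have : ∀ x : ℝ, (Real.toNNReal (gaussianPDFReal 0 v x)) • x ^ 2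
        = (Real.sqrt (2 * π * v))⁻¹ * (x ^ 2 * Real.exp (-(2 * (v:ℝ))⁻¹ * x ^ 2)) := by
      intro x
      rw [NNReal.smul_def, smul_eq_mul,
        Real.coe_toNNReal _ (gaussianPDFReal_nonneg 0 v x)]
      simp only [gaussianPDFReal, sub_zero]
      rw [show -x^2/(2*(v:ℝ)) = -(2*(v:ℝ))⁻¹ * x^2 by ring]
      ring
    simp_rw [this]
    rw [integral_const_mul, integral_sq_mul_exp (by positivity)]
    have h2v : (0:ℝ) < 2 * v := by positivity
    rw [one_div, inv_inv]
    have hrw : ((2*(v:ℝ))) ^ (3/2:ℝ) = (2*(v:ℝ)) * Real.sqrt (2*(v:ℝ)) := by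
      rw [show (3/2:ℝ) = 1 + 1/2 by norm_num, Real.rpow_add h2v, Real.rpow_one,
        ← Real.sqrt_eq_rpow]
    rw [hrw, show 2*π*(v:ℝ) = (2*(v:ℝ))*π by ring, Real.sqrt_mul h2v.le]
    have hs1 : (0:ℝ) < Real.sqrt (2*(v:ℝ)) := Real.sqrt_pos.mpr h2v
    have hs2 : (0:ℝ) < Real.sqrt π := Real.sqrt_pos.mpr pi_pos
    field_simp

end Gauss

theorem stmt_13 (p : ℕ) [NeZero p] (s : ℝ) (hs : 0 < s)
    (θ θhat : Matrix (ZMod p) (ZMod p) ℝ)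
    (hθ0 : θ 0 0 = 0) (hθsym : ∀ i j : ZMod p, θ i j = θ (-i) (-j))
    (hhat0 : θhat 0 0 = 0) (hhatsym : ∀ i j : ZMod p, θhat i j = θhat (-i) (-j))
    (hpd : (1 - Cmat p θ).PosDef)
    (Sg : Matrix (ZMod p × ZMod p) (ZMod p × ZMod p) ℝ)
    (hSg : Sg = s • (1 - Cmat p θ)⁻¹)
    (Ω : Type) (mΩ : MeasurableSpace Ω) (P : Measure Ω) (hP : IsProbabilityMeasure P)
    (X : Ω → (ZMod p × ZMod p) → ℝ) (hmeas : Measurable X)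
    -- `X` is a centered Gaussian vector with covariance `Sg`: every linear
    -- functional of `X` is a centered real Gaussian with the induced variance.
    (hGauss : ∀ c : (ZMod p × ZMod p) → ℝ,
      Measure.map (fun ω => ∑ a : ZMod p × ZMod p, c a * X ω a) P =
        gaussianReal 0 (Real.toNNReal
          (∑ a : ZMod p × ZMod p, ∑ b : ZMod p × ZMod p, c a * Sg a b * c b))) :
    (∫ ω, (X ω (0, 0) - ∑ a : ZMod p × ZMod p, θhat a.1 a.2 * X ω a) ^ 2 ∂P) =
      s + (1 / (p : ℝ) ^ 2) *
        Matrix.trace ((Cmat p θhat - Cmat p θ) * Sg * (Cmat p θhat - Cmat p θ)) := by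
  classical
  set B : Matrix (ZMod p × ZMod p) (ZMod p × ZMod p) ℝ := 1 - Cmat p θ with hB
  set D : Matrix (ZMod p × ZMod p) (ZMod p × ZMod p) ℝ := Cmat p θhat - Cmat p θ with hD
  set A : Matrix (ZMod p × ZMod p) (ZMod p × ZMod p) ℝ := 1 - Cmat p θhat with hA
  set c : (ZMod p × ZMod p) → ℝ :=
    fun b => (if (0,0) = b then (1:ℝ) else 0) - θhat b.1 b.2 with hc
  set V : ℝ := ∑ a : ZMod p × ZMod p, ∑ b : ZMod p × ZMod p, c a * Sg a b * c b with hV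
  -- the integrand as a single linear functional
  have hfun : ∀ ω, X ω ((0:ZMod p), (0:ZMod p)) - ∑ a : ZMod p × ZMod p, θhat a.1 a.2 * X ω a
      = ∑ a : ZMod p × ZMod p, c a * X ω a := by
    intro ω
    simp [hc, sub_mul, Finset.sum_sub_distrib, ite_mul, Finset.sum_ite_eq]
  -- measurability of the functional
  have hYmeas : Measurable fun ω => ∑ a : ZMod p × ZMod p, c a * X ω a := by
    apply Finset.measurable_sum
    intro a _
    exact measurable_const.mul ((measurable_pi_apply a).comp hmeas)
  -- the integral via the Gaussian image measure
  have hint : (∫ ω, (∑ a : ZMod p × ZMod p, c a * X ω a) ^ 2 ∂P) = ((Real.toNNReal V : ℝ≥0) : ℝ) := by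
    have h1 : ∫ x : ℝ, x ^ 2 ∂(Measure.map (fun ω => ∑ a : ZMod p × ZMod p, c a * X ω a) P)
        = ∫ ω, (∑ a : ZMod p × ZMod p, c a * X ω a) ^ 2 ∂P :=
      integral_map hYmeas.aemeasurable (by fun_prop)
    rw [← h1, hGauss c, ← hV, sq_integral_gaussianReal]
  -- basic facts about B
  have hdet : IsUnit B.det := isUnit_iff_ne_zero.mpr hpd.det_pos.ne'
  have hBinv : B * B⁻¹ = 1 := Matrix.mul_nonsing_inv B hdet
  have hinvB : B⁻¹ * B = 1 := Matrix.nonsing_inv_mul B hdet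
  have hSgB : Sg * B = s • 1 := by rw [hSg, Matrix.smul_mul, hinvB]
  have hBSg : B * Sg = s • 1 := by rw [hSg, Matrix.mul_smul, hBinv]
  -- nonnegativity of V
  have hVnn : 0 ≤ V := by
    have h1 : (B⁻¹).PosDef := hpd.inv
    have h2 := h1.posSemidef.dotProduct_mulVec_nonneg c
    simp only [star_trivial] at h2
    have h3 : V = s * (c ⬝ᵥ (B⁻¹ *ᵥ c)) := by
      rw [hV]
      simp only [dotProduct, Matrix.mulVec, Finset.mul_sum, hSg, Matrix.smul_apply,
        smul_eq_mul]
      refine Finset.sum_congr rfl fun a _ => Finset.sum_congr rfl fun b _ => ?_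
      ring
    rw [h3]
    exact mul_nonneg hs.le h2
  -- V as a matrix entry
  have hArow : ∀ b : ZMod p × ZMod p, A ((0:ZMod p), (0:ZMod p)) b = c b := by
    intro b
    simp [hA, hc, Matrix.sub_apply, Matrix.one_apply, Cmat]
  have hAcol : ∀ a : ZMod p × ZMod p, A a ((0:ZMod p), (0:ZMod p)) = c a := by
    intro a
    simp only [hA, hc, Matrix.sub_apply, Matrix.one_apply, Cmat, Matrix.of_apply]
    rw [zero_sub, zero_sub, ← hhatsym a.1 a.2]
    congr 1
    simp [eq_comm]
  have hV2 : V = (A * Sg * A) ((0:ZMod p), (0:ZMod p)) ((0:ZMod p), (0:ZMod p)) := by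
    rw [hV, Finset.sum_comm]
    simp only [Matrix.mul_apply, Finset.sum_mul]
    refine Finset.sum_congr rfl fun b _ => Finset.sum_congr rfl fun a _ => ?_
    rw [hArow a, hAcol b]
  -- expand A * Sg * A
  have e1 : B * Sg * B = s • B := by rw [hBSg, Matrix.smul_mul, one_mul]
  have e2 : B * Sg * D = s • D := by rw [hBSg, Matrix.smul_mul, one_mul]
  have e3 : D * Sg * B = s • D := by rw [Matrix.mul_assoc, hSgB, Matrix.mul_smul, mul_one]
  have hABD : A = B - D := by rw [hA, hB, hD]; abel
  have expand : A * Sg * A = s • B - s • D - (s • D - D * Sg * D) := by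
    rw [hABD]
    calc (B - D) * Sg * (B - D)
        = B * Sg * B - B * Sg * D - (D * Sg * B - D * Sg * D) := by noncomm_ring
      _ = _ := by rw [e1, e2, e3]
  have hAZZ : (A * Sg * A) ((0:ZMod p), (0:ZMod p)) ((0:ZMod p), (0:ZMod p))
      = s + (D * Sg * D) ((0:ZMod p), (0:ZMod p)) ((0:ZMod p), (0:ZMod p)) := by
    rw [expand]
    have hBzz : B ((0:ZMod p), (0:ZMod p)) ((0:ZMod p), (0:ZMod p)) = 1 := by
      simp [hB, Matrix.sub_apply, Matrix.one_apply, Cmat, hθ0]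
    have hDzz : D ((0:ZMod p), (0:ZMod p)) ((0:ZMod p), (0:ZMod p)) = 0 := by
      simp [hD, Matrix.sub_apply, Cmat, hθ0, hhat0]
    simp only [Matrix.sub_apply, Matrix.smul_apply, smul_eq_mul, hBzz, hDzz]
    ring
  -- circulant structure and the trace identity
  have hcB : IsCirc B := hB ▸ IsCirc.one.sub (isCirc_Cmat p θ)
  have hcD : IsCirc D := hD ▸ (isCirc_Cmat p θhat).sub (isCirc_Cmat p θ)
  have hcSg : IsCirc Sg := hSg ▸ hcB.inv.smul s
  have hcM : IsCirc (D * Sg * D) := (hcD.mul hcSg).mul hcD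
  have hcard : (Fintype.card (ZMod p × ZMod p) : ℝ) = (p : ℝ) ^ 2 := by
    rw [Fintype.card_prod, ZMod.card]
    push_cast
    ring
  have hp2 : ((p : ℝ) ^ 2) ≠ 0 := by
    have := NeZero.ne p
    positivity
  have htr : (D * Sg * D) ((0:ZMod p), (0:ZMod p)) ((0:ZMod p), (0:ZMod p))
      = (1 / (p:ℝ) ^ 2) * Matrix.trace (D * Sg * D) := by
    rw [hcM.trace_eq, hcard]
    have h00 : ((0:ZMod p), (0:ZMod p)) = (0 : ZMod p × ZMod p) := rfl
    rw [h00]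
    field_simp
    exact (mul_div_cancel_right₀ _ (by exact_mod_cast NeZero.ne p)).symm
  -- put everything together
  calc (∫ ω, (X ω ((0:ZMod p), (0:ZMod p)) - ∑ a : ZMod p × ZMod p, θhat a.1 a.2 * X ω a) ^ 2 ∂P)
      = ∫ ω, (∑ a : ZMod p × ZMod p, c a * X ω a) ^ 2 ∂P := by simp_rw [hfun]
    _ = ((Real.toNNReal V : ℝ≥0) : ℝ) := hint
    _ = V := Real.coe_toNNReal _ hVnn
    _ = s + (D * Sg * D) ((0:ZMod p), (0:ZMod p)) ((0:ZMod p), (0:ZMod p)) := hV2.trans hAZZ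
    _ = s + (1 / (p : ℝ) ^ 2) * Matrix.trace (D * Sg * D) := by rw [htr]
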